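/- arXiv:1802.00397 — 2 statements merged into one kernel-verified Lean document; each statement's English description precedes it below -/
import Mathlib

section
/- For every measurable set A ⊆ ℝ, the Lebesgue measure of the preimage T⁻¹(A) under the Boole map T(x) = x - 1/x equals the Lebesgue measure of A. -/
open MeasureTheory Set

noncomputable def sq4 (y : ℝ) : ℝ := Real.sqrt (y ^ 2 + 4)

lemma sq4_sq (y : ℝ) : sq4 y ^ 2 = y ^ 2 + 4 := Real.sq_sqrt (by positivity)

lemma sq4_pos (y : ℝ) : 0 < sq4 y := Real.sqrt_pos.mpr (by positivity)

lemma abs_lt_sq4 (y : ℝ) : |y| < sq4 y := by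
  have h := sq4_sq y
  have h2 := sq4_pos y
  nlinarith [abs_nonneg y, sq_abs y]

noncomputable def gp (y : ℝ) : ℝ := (y + sq4 y) / 2
noncomputable def gm (y : ℝ) : ℝ := (y - sq4 y) / 2

lemma gp_pos (y : ℝ) : 0 < gp y := by
  have h1 := abs_lt_sq4 y; have h2 := neg_abs_le y; unfold gp; linarith

lemma gm_neg (y : ℝ) : gm y < 0 := by
  have h1 := abs_lt_sq4 y; have h2 := le_abs_self y; unfold gm; linarith

lemma T_gp (y : ℝ) : gp y - 1 / gp y = y := by
  have hx := (gp_pos y).ne'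
  have h := sq4_sq y
  field_simp
  unfold gp at *
  nlinarith

lemma T_gm (y : ℝ) : gm y - 1 / gm y = y := by
  have hx := (gm_neg y).ne
  have h := sq4_sq y
  field_simp
  unfold gm at *
  nlinarith

lemma gp_T {x : ℝ} (hx : 0 < x) : gp (x - 1 / x) = x := by
  have h1 : (x - 1 / x) ^ 2 + 4 = (x + 1 / x) ^ 2 := by field_simp; ring
  have h2 : sq4 (x - 1 / x) = x + 1 / x := by
    rw [sq4, h1, Real.sqrt_sq (by positivity)]
  rw [gp, h2]; ring

lemma gm_T {x : ℝ} (hx : x < 0) : gm (x - 1 / x) = x := by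
  have hx0 : x ≠ 0 := hx.ne
  have hinv : 1 / x < 0 := one_div_neg.mpr hx
  have h1 : (x - 1 / x) ^ 2 + 4 = (-(x + 1 / x)) ^ 2 := by field_simp; ring
  have h2 : sq4 (x - 1 / x) = -(x + 1 / x) := by
    rw [sq4, h1, Real.sqrt_sq (by linarith)]
  rw [gm, h2]; ring

noncomputable def dp (y : ℝ) : ℝ := (1 + y / sq4 y) / 2
noncomputable def dm (y : ℝ) : ℝ := (1 - y / sq4 y) / 2

lemma hasDerivAt_sq4 (y : ℝ) : HasDerivAt sq4 (y / sq4 y) y := by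
  have h : HasDerivAt (fun y : ℝ => y ^ 2 + 4) (2 * y) y := by
    simpa using (hasDerivAt_pow 2 y).add_const 4
  have h2 := h.sqrt (by positivity)
  convert h2 using 1
  all_goals unfold sq4
  field_simp
  ring

lemma hasDerivAt_gp (y : ℝ) : HasDerivAt gp (dp y) y := by
  have := ((hasDerivAt_id y).add (hasDerivAt_sq4 y)).div_const 2
  unfold gp dp; simpa using this

lemma hasDerivAt_gm (y : ℝ) : HasDerivAt gm (dm y) y := by
  have := ((hasDerivAt_id y).sub (hasDerivAt_sq4 y)).div_const 2
  unfold gm dm; simpa using this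

lemma abs_div_sq4_lt (y : ℝ) : |y / sq4 y| < 1 := by
  rw [abs_div, abs_of_pos (sq4_pos y), div_lt_one (sq4_pos y)]
  exact abs_lt_sq4 y

lemma dp_pos (y : ℝ) : 0 < dp y := by
  have := abs_lt (a := y / sq4 y) |>.mp (abs_div_sq4_lt y)
  unfold dp; linarith [this.1]

lemma dm_pos (y : ℝ) : 0 < dm y := by
  have := abs_lt (a := y / sq4 y) |>.mp (abs_div_sq4_lt y)
  unfold dm; linarith [this.2]

lemma dp_add_dm (y : ℝ) : dp y + dm y = 1 := by unfold dp dm; ring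

lemma continuous_sq4 : Continuous sq4 :=
  Real.continuous_sqrt.comp (by continuity)

lemma continuous_gp : Continuous gp := by
  unfold gp; exact (continuous_id.add continuous_sq4).div_const 2

lemma continuous_gm : Continuous gm := by
  unfold gm; exact (continuous_id.sub continuous_sq4).div_const 2

lemma gp_inj : Function.Injective gp :=
  Function.LeftInverse.injective (g := fun x => x - 1 / x) T_gp

lemma gm_inj : Function.Injective gm :=
  Function.LeftInverse.injective (g := fun x => x - 1 / x) T_gm

lemma measure_image_gp (A : Set ℝ) (hA : MeasurableSet A) :
    volume (gp '' A) = ∫⁻ y in A, ENNReal.ofReal (dp y) := by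
  rw [← lintegral_abs_det_fderiv_eq_addHaar_image volume hA
      (f' := fun y => ContinuousLinearMap.smulRight (1 : ℝ →L[ℝ] ℝ) (dp y))
      (fun y _ => ((hasDerivAt_gp y).hasDerivWithinAt).hasFDerivWithinAt)
      (gp_inj.injOn)]
  simp only [ContinuousLinearMap.det_smulRight, ContinuousLinearMap.one_apply, one_mul]
  congr 1
  ext y
  rw [abs_of_pos (dp_pos y)]

lemma measure_image_gm (A : Set ℝ) (hA : MeasurableSet A) :
    volume (gm '' A) = ∫⁻ y in A, ENNReal.ofReal (dm y) := by
  rw [← lintegral_abs_det_fderiv_eq_addHaar_image volume hA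
      (f' := fun y => ContinuousLinearMap.smulRight (1 : ℝ →L[ℝ] ℝ) (dm y))
      (fun y _ => ((hasDerivAt_gm y).hasDerivWithinAt).hasFDerivWithinAt)
      (gm_inj.injOn)]
  simp only [ContinuousLinearMap.det_smulRight, ContinuousLinearMap.one_apply, one_mul]
  congr 1
  ext y
  rw [abs_of_pos (dm_pos y)]

theorem boole_measure_preserving (A : Set ℝ) (hA : MeasurableSet A) :
    volume ((fun x : ℝ => x - 1 / x) ⁻¹' A) = volume A := by
  set T := fun x : ℝ => x - 1 / x with hT
  set S := T ⁻¹' A with hS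
  have hSpos : S ∩ Ioi 0 = gp '' A := by
    ext x
    constructor
    · rintro ⟨hxA, hx⟩
      exact ⟨T x, hxA, gp_T hx⟩
    · rintro ⟨y, hy, rfl⟩
      refine ⟨?_, gp_pos y⟩
      show gp y - 1 / gp y ∈ A
      rw [T_gp]; exact hy
  have hSneg : S ∩ Iio 0 = gm '' A := by
    ext x
    constructor
    · rintro ⟨hxA, hx⟩
      exact ⟨T x, hxA, gm_T hx⟩
    · rintro ⟨y, hy, rfl⟩
      refine ⟨?_, gm_neg y⟩
      show gm y - 1 / gm y ∈ A
      rw [T_gm]; exact hy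
  have himp : MeasurableSet (gp '' A) :=
    (continuous_gp.measurableEmbedding gp_inj).measurableSet_image.mpr hA
  have hsplit : volume S = volume (S ∩ Iio 0) + volume (S ∩ Ioi 0) := by
    apply le_antisymm
    · have hsub : S ⊆ (S ∩ Iio 0) ∪ ({0} ∪ (S ∩ Ioi 0)) := by
        intro x hx
        rcases lt_trichotomy x 0 with h | h | h
        · exact Or.inl ⟨hx, h⟩
        · exact Or.inr (Or.inl (by simp [h]))
        · exact Or.inr (Or.inr ⟨hx, h⟩)
      calc volume S ≤ volume ((S ∩ Iio 0) ∪ ({0} ∪ (S ∩ Ioi 0))) := measure_mono hsub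
        _ ≤ volume (S ∩ Iio 0) + volume ({0} ∪ (S ∩ Ioi 0)) := measure_union_le _ _
        _ ≤ volume (S ∩ Iio 0) + (volume ({0} : Set ℝ) + volume (S ∩ Ioi 0)) := by
            gcongr; exact measure_union_le _ _
        _ = volume (S ∩ Iio 0) + volume (S ∩ Ioi 0) := by
            rw [Real.volume_singleton]; ring
    · have hdisj : Disjoint (S ∩ Iio 0) (S ∩ Ioi 0) :=
        Disjoint.mono inter_subset_right inter_subset_right ((Set.Iic_disjoint_Ioi le_rfl).mono_left Set.Iio_subset_Iic_self)
      rw [← measure_union hdisj (hSpos ▸ himp)]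
      exact measure_mono (Set.union_subset inter_subset_left inter_subset_left)
  rw [hsplit, hSpos, hSneg, measure_image_gp A hA, measure_image_gm A hA,
    ← lintegral_add_left (by
      exact (ENNReal.measurable_ofReal.comp
        ((continuous_const.sub (continuous_id.div continuous_sq4
          (fun y => (sq4_pos y).ne'))).div_const 2).measurable) : Measurable fun y =>
            ENNReal.ofReal (dm y))]
  have : ∀ y : ℝ, ENNReal.ofReal (dm y) + ENNReal.ofReal (dp y) = 1 := by
    intro y
    rw [← ENNReal.ofReal_add (dm_pos y).le (dp_pos y).le]
    rw [show dm y + dp y = 1 by have := dp_add_dm y; linarith]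
    exact ENNReal.ofReal_one
  simp only [this]
  simp
end

section
/- For all x > 4, φ₁'''(x) + φ₁''(x) - (φ₁'(x))² > 0, where φ₁(x) = (-x+√(x²+4))/2. Equivalently, (x⁵ + 8x³ + 4x² + 4x + 16) - √(x²+4)·(x⁴ + 6x² + 8) > 0 for all x > 4. -/
open Real

private lemma spos (y : ℝ) : 0 < Real.sqrt (y ^ 2 + 4) :=
  Real.sqrt_pos.mpr (by positivity)

private lemma ssq (y : ℝ) : Real.sqrt (y ^ 2 + 4) ^ 2 = y ^ 2 + 4 :=
  Real.sq_sqrt (by positivity)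

private lemma hds (y : ℝ) :
    HasDerivAt (fun y : ℝ => Real.sqrt (y ^ 2 + 4)) (y / Real.sqrt (y ^ 2 + 4)) y := by
  have h1 : HasDerivAt (fun y : ℝ => y ^ 2 + 4) (2 * y) y := by
    simpa using (hasDerivAt_pow 2 y).add_const 4
  have h2 := (Real.hasDerivAt_sqrt (by positivity : (y:ℝ) ^ 2 + 4 ≠ 0)).comp y h1
  refine h2.congr_deriv ?_
  symm
  field_simp

private lemma hd1 (y : ℝ) :
    HasDerivAt (fun y : ℝ => (-y + Real.sqrt (y ^ 2 + 4)) / 2)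
      ((-1 + y / Real.sqrt (y ^ 2 + 4)) / 2) y := by
  exact ((hasDerivAt_id y).neg.add (hds y)).div_const 2

private lemma hd2 (y : ℝ) :
    HasDerivAt (fun y : ℝ => (-1 + y / Real.sqrt (y ^ 2 + 4)) / 2)
      (2 / Real.sqrt (y ^ 2 + 4) ^ 3) y := by
  have hne : Real.sqrt (y ^ 2 + 4) ≠ 0 := (spos y).ne'
  have h := (((hasDerivAt_id y).div (hds y) hne).const_add (-1)).div_const 2
  refine h.congr_deriv ?_
  symm
  have h2 := ssq y
  simp only [id]
  field_simp
  linear_combination (-1 : ℝ) * ssq y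

private lemma hd3 (y : ℝ) :
    HasDerivAt (fun y : ℝ => 2 / Real.sqrt (y ^ 2 + 4) ^ 3)
      (-6 * y / Real.sqrt (y ^ 2 + 4) ^ 5) y := by
  have hne : Real.sqrt (y ^ 2 + 4) ≠ 0 := (spos y).ne'
  have hcube : HasDerivAt (fun y : ℝ => Real.sqrt (y ^ 2 + 4) ^ 3)
      (3 * Real.sqrt (y ^ 2 + 4) ^ 2 * (y / Real.sqrt (y ^ 2 + 4))) y := by
    simpa using (hds y).fun_pow 3
  have h := (hasDerivAt_const y (2:ℝ)).div hcube (by positivity)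
  refine h.congr_deriv ?_
  symm
  field_simp
  ring

private lemma deriv1 : deriv (fun y : ℝ => (-y + Real.sqrt (y ^ 2 + 4)) / 2)
    = fun y : ℝ => (-1 + y / Real.sqrt (y ^ 2 + 4)) / 2 :=
  funext fun y => (hd1 y).deriv

private lemma deriv2 : deriv (deriv (fun y : ℝ => (-y + Real.sqrt (y ^ 2 + 4)) / 2))
    = fun y : ℝ => 2 / Real.sqrt (y ^ 2 + 4) ^ 3 := by
  rw [deriv1]; exact funext fun y => (hd2 y).deriv

private lemma deriv3 : deriv (deriv (deriv (fun y : ℝ => (-y + Real.sqrt (y ^ 2 + 4)) / 2)))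
    = fun y : ℝ => -6 * y / Real.sqrt (y ^ 2 + 4) ^ 5 := by
  rw [deriv2]; exact funext fun y => (hd3 y).deriv

theorem folded_boole_B (x : ℝ) (hx : 4 < x) :
    deriv (deriv (deriv (fun y : ℝ => (-y + Real.sqrt (y ^ 2 + 4)) / 2))) x +
      deriv (deriv (fun y : ℝ => (-y + Real.sqrt (y ^ 2 + 4)) / 2)) x -
      (deriv (fun y : ℝ => (-y + Real.sqrt (y ^ 2 + 4)) / 2) x) ^ 2 > 0 ∧
    (x ^ 5 + 8 * x ^ 3 + 4 * x ^ 2 + 4 * x + 16) -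
      Real.sqrt (x ^ 2 + 4) * (x ^ 4 + 6 * x ^ 2 + 8) > 0 := by
  have hs : 0 < Real.sqrt (x ^ 2 + 4) := spos x
  have hs2 : Real.sqrt (x ^ 2 + 4) ^ 2 = x ^ 2 + 4 := ssq x
  set s := Real.sqrt (x ^ 2 + 4) with hsdef
  have ht : 0 < x - 4 := by linarith
  -- the polynomial inequality
  have h2 : (x ^ 5 + 8 * x ^ 3 + 4 * x ^ 2 + 4 * x + 16) - s * (x ^ 4 + 6 * x ^ 2 + 8) > 0 := by
    have hQ : 0 < x ^ 4 + 6 * x ^ 2 + 8 := by positivity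
    have hPQ : 0 < (x ^ 5 + 8 * x ^ 3 + 4 * x ^ 2 + 4 * x + 16) + s * (x ^ 4 + 6 * x ^ 2 + 8) := by
      positivity
    have hD : 0 < (x ^ 5 + 8 * x ^ 3 + 4 * x ^ 2 + 4 * x + 16) ^ 2
        - (x ^ 2 + 4) * (x ^ 4 + 6 * x ^ 2 + 8) ^ 2 := by
      nlinarith [pow_pos ht 7, pow_pos ht 6, pow_pos ht 5, pow_pos ht 4,
        pow_pos ht 3, pow_pos ht 2, ht]
    nlinarith [hPQ, hD, hs2]
  refine ⟨?_, h2⟩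
  rw [deriv3, deriv2, deriv1]
  simp only
  rw [← hsdef]
  have hid : -6 * x / s ^ 5 + 2 / s ^ 3 - ((-1 + x / s) / 2) ^ 2
      = ((x ^ 5 + 8 * x ^ 3 + 4 * x ^ 2 + 4 * x + 16) - s * (x ^ 4 + 6 * x ^ 2 + 8))
        / (2 * s ^ 5) := by
    rw [eq_div_iff (by positivity)]
    field_simp
    linear_combination (2 * x ^ 3 - 2 * s * x ^ 2 + (8 + 2 * s ^ 2) * x - s ^ 3 - 4 * s + 8) * hs2
  rw [hid]
  positivity
end
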